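/- Let K be a field, let u, v ∈ K, let g ≥ 2 be an integer, and let a, b, c, d ∈ K be nonzero and pairwise distinct. Then the coefficient of x^{2g−3} in the formal power series (1+ux)^g (1+vx)^g (1−ax)^{−1} (1−bx)^{−1} (1−cx)^{−1} (1−dx)^{−1} ∈ K[[x]] equals (a+u)^g (a+v)^g /((a−b)(a−c)(a−d)) + (b+u)^g (b+v)^g /((b−a)(b−c)(b−d)) + (c+u)^g (c+v)^g /((c−a)(c−b)(c−d)) + (d+u)^g (d+v)^g /((d−a)(d−b)(d−c)). -/

import Mathlib

open Polynomial

lemma geom_series_coeff {K : Type*} [Field K] (a : K) (n : ℕ) :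
    PowerSeries.coeff n (1 - PowerSeries.C a * PowerSeries.X)⁻¹ = a ^ n := by
  have h0 : PowerSeries.constantCoeff (1 - PowerSeries.C a * PowerSeries.X) ≠ 0 := by
    simp
  have h : (1 - PowerSeries.C a * PowerSeries.X)⁻¹
      = PowerSeries.mk fun k => a ^ k := by
    rw [PowerSeries.inv_eq_iff_mul_eq_one h0]
    ext m
    cases m with
    | zero => simp
    | succ n =>
      have hre : (PowerSeries.mk fun k => (a : K) ^ k) * (PowerSeries.C a * PowerSeries.X)
          = (PowerSeries.C a * PowerSeries.mk fun k => (a : K) ^ k) * PowerSeries.X := by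
        ring
      rw [mul_sub, mul_one, map_sub, hre, PowerSeries.coeff_succ_mul_X]
      simp only [PowerSeries.coeff_mk, PowerSeries.coeff_C_mul, PowerSeries.coeff_one,
        Nat.succ_ne_zero, if_false]
      ring
  rw [h, PowerSeries.coeff_mk]

set_option maxHeartbeats 1600000 in
/-- Closed-form evaluation of the coefficient of `x^(2g-3)` in
`(1+ux)^g (1+vx)^g (1-ax)⁻¹ (1-bx)⁻¹ (1-cx)⁻¹ (1-dx)⁻¹ ∈ K⟦x⟧`
(the residue `F₂(a,b,c,d)` of the paper). -/
theorem coeff_two_g_sub_three_eq_residue_sum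
    (K : Type*) [Field K] (u v : K) (g : ℕ) (hg : 2 ≤ g)
    (a b c d : K) (ha : a ≠ 0) (hb : b ≠ 0) (hc : c ≠ 0) (hd : d ≠ 0)
    (hab : a ≠ b) (hac : a ≠ c) (had : a ≠ d)
    (hbc : b ≠ c) (hbd : b ≠ d) (hcd : c ≠ d) :
    PowerSeries.coeff (2 * g - 3)
      ((1 + PowerSeries.C u * PowerSeries.X) ^ g *
        (1 + PowerSeries.C v * PowerSeries.X) ^ g *
        (1 - PowerSeries.C a * PowerSeries.X)⁻¹ *
        (1 - PowerSeries.C b * PowerSeries.X)⁻¹ *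
        (1 - PowerSeries.C c * PowerSeries.X)⁻¹ *
        (1 - PowerSeries.C d * PowerSeries.X)⁻¹) =
      (a + u) ^ g * (a + v) ^ g / ((a - b) * (a - c) * (a - d)) +
      (b + u) ^ g * (b + v) ^ g / ((b - a) * (b - c) * (b - d)) +
      (c + u) ^ g * (c + v) ^ g / ((c - a) * (c - b) * (c - d)) +
      (d + u) ^ g * (d + v) ^ g / ((d - a) * (d - b) * (d - c)) := by
  classical
  have hab' : a - b ≠ 0 := sub_ne_zero_of_ne hab
  have hac' : a - c ≠ 0 := sub_ne_zero_of_ne hac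
  have had' : a - d ≠ 0 := sub_ne_zero_of_ne had
  have hbc' : b - c ≠ 0 := sub_ne_zero_of_ne hbc
  have hbd' : b - d ≠ 0 := sub_ne_zero_of_ne hbd
  have hcd' : c - d ≠ 0 := sub_ne_zero_of_ne hcd
  have hba' : b - a ≠ 0 := sub_ne_zero_of_ne hab.symm
  have hca' : c - a ≠ 0 := sub_ne_zero_of_ne hac.symm
  have hda' : d - a ≠ 0 := sub_ne_zero_of_ne had.symm
  have hcb' : c - b ≠ 0 := sub_ne_zero_of_ne hbc.symm
  have hdb' : d - b ≠ 0 := sub_ne_zero_of_ne hbd.symm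
  have hdc' : d - c ≠ 0 := sub_ne_zero_of_ne hcd.symm
  -- polynomial data
  set P : K[X] := (1 + Polynomial.C u * Polynomial.X) ^ g *
      (1 + Polynomial.C v * Polynomial.X) ^ g with hPdef
  set pa := P.eval a⁻¹ with hpa
  set pb := P.eval b⁻¹ with hpb
  set pc := P.eval c⁻¹ with hpc
  set pd := P.eval d⁻¹ with hpd
  set Ba := pa * a ^ 3 / ((a - b) * (a - c) * (a - d)) with hBa
  set Bb := pb * b ^ 3 / ((b - a) * (b - c) * (b - d)) with hBb
  set Bc := pc * c ^ 3 / ((c - a) * (c - b) * (c - d)) with hBc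
  set Bd := pd * d ^ 3 / ((d - a) * (d - b) * (d - c)) with hBd
  set fa : K[X] := 1 - Polynomial.C a * Polynomial.X with hfa
  set fb : K[X] := 1 - Polynomial.C b * Polynomial.X with hfb
  set fc : K[X] := 1 - Polynomial.C c * Polynomial.X with hfc
  set fd : K[X] := 1 - Polynomial.C d * Polynomial.X with hfd
  set S : K[X] := Polynomial.C Ba * (fb * fc * fd) + Polynomial.C Bb * (fa * fc * fd)
      + Polynomial.C Bc * (fa * fb * fd) + Polynomial.C Bd * (fa * fb * fc) with hS
  set D : K[X] := fa * fb * fc * fd with hD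
  set N : K[X] := P - S with hN
  -- roots
  have heva : fa.eval a⁻¹ = 0 := by simp [hfa, mul_inv_cancel₀ ha]
  have hevb : fb.eval b⁻¹ = 0 := by simp [hfb, mul_inv_cancel₀ hb]
  have hevc : fc.eval c⁻¹ = 0 := by simp [hfc, mul_inv_cancel₀ hc]
  have hevd : fd.eval d⁻¹ = 0 := by simp [hfd, mul_inv_cancel₀ hd]
  have hrootA : N.eval a⁻¹ = 0 := by
    rw [hN, eval_sub, hS]
    simp only [eval_add, eval_mul, eval_C, heva, mul_zero, zero_mul, add_zero, zero_add,
      hfb, hfc, hfd, eval_sub, eval_one, eval_mul, eval_C, eval_X, ← hpa]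
    rw [hBa]
    field_simp
    ring
  have hrootB : N.eval b⁻¹ = 0 := by
    rw [hN, eval_sub, hS]
    simp only [eval_add, eval_mul, eval_C, hevb, mul_zero, zero_mul, add_zero, zero_add,
      hfa, hfc, hfd, eval_sub, eval_one, eval_mul, eval_C, eval_X, ← hpb]
    rw [hBb]
    field_simp
    ring
  have hrootC : N.eval c⁻¹ = 0 := by
    rw [hN, eval_sub, hS]
    simp only [eval_add, eval_mul, eval_C, hevc, mul_zero, zero_mul, add_zero, zero_add,
      hfa, hfb, hfd, eval_sub, eval_one, eval_mul, eval_C, eval_X, ← hpc]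
    rw [hBc]
    field_simp
    ring
  have hrootD : N.eval d⁻¹ = 0 := by
    rw [hN, eval_sub, hS]
    simp only [eval_add, eval_mul, eval_C, hevd, mul_zero, zero_mul, add_zero, zero_add,
      hfa, hfb, hfc, eval_sub, eval_one, eval_mul, eval_C, eval_X, ← hpd]
    rw [hBd]
    field_simp
    ring
  -- divisibility by each linear factor
  have hkey : ∀ x : K, x ≠ 0 →
      (1 - Polynomial.C x * Polynomial.X : K[X])
        = Polynomial.C (-x) * (Polynomial.X - Polynomial.C x⁻¹) := by
    intro x hx
    rw [mul_sub, ← Polynomial.C_mul, neg_mul, mul_inv_cancel₀ hx]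
    simp only [map_neg, map_one]
    ring
  have hdvd : ∀ x : K, x ≠ 0 → N.eval x⁻¹ = 0 →
      (1 - Polynomial.C x * Polynomial.X : K[X]) ∣ N := by
    intro x hx hroot
    rw [hkey x hx]
    exact (IsUnit.mul_left_dvd (isUnit_C.mpr (isUnit_iff_ne_zero.mpr (neg_ne_zero.mpr hx)))).mpr
      (dvd_iff_isRoot.mpr hroot)
  have hdvdA : fa ∣ N := by rw [hfa]; exact hdvd a ha hrootA
  have hdvdB : fb ∣ N := by rw [hfb]; exact hdvd b hb hrootB
  have hdvdC : fc ∣ N := by rw [hfc]; exact hdvd c hc hrootC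
  have hdvdD : fd ∣ N := by rw [hfd]; exact hdvd d hd hrootD
  -- coprimality
  have cop : ∀ x y : K, x - y ≠ 0 →
      IsCoprime ((1 : K[X]) - Polynomial.C x * Polynomial.X)
        (1 - Polynomial.C y * Polynomial.X) := by
    intro x y hxy
    have hyx : y - x ≠ 0 := fun h => hxy (by linear_combination -h)
    refine ⟨Polynomial.C (y / (y - x)), Polynomial.C (x / (x - y)), ?_⟩
    have h1 : y / (y - x) + x / (x - y) = 1 := by field_simp; ring
    have h2 : y / (y - x) * x + x / (x - y) * y = 0 := by field_simp; ring
    calc Polynomial.C (y / (y - x)) * (1 - Polynomial.C x * Polynomial.X)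
          + Polynomial.C (x / (x - y)) * (1 - Polynomial.C y * Polynomial.X)
        = Polynomial.C (y / (y - x) + x / (x - y))
          - Polynomial.C (y / (y - x) * x + x / (x - y) * y) * Polynomial.X := by
          simp only [map_add, map_mul]; ring
      _ = 1 := by rw [h1, h2]; simp
  have hdvd2 : fa * fb ∣ N := by
    refine IsCoprime.mul_dvd ?_ hdvdA hdvdB
    rw [hfa, hfb]; exact cop a b hab'
  have hdvd3 : fa * fb * fc ∣ N := by
    refine IsCoprime.mul_dvd ?_ hdvd2 hdvdC
    rw [hfa, hfb, hfc]
    exact IsCoprime.mul_left (cop a c hac') (cop b c hbc')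
  have hdvd4 : D ∣ N := by
    rw [hD]
    refine IsCoprime.mul_dvd ?_ hdvd3 hdvdD
    rw [hfa, hfb, hfc, hfd]
    exact IsCoprime.mul_left (IsCoprime.mul_left (cop a d had') (cop b d hbd')) (cop c d hcd')
  -- quotient
  have hD0 : D ≠ 0 := by
    intro h
    have h2 := congrArg (Polynomial.eval 0) h
    simp [hD, hfa, hfb, hfc, hfd] at h2
  set E : K[X] := N / D with hE
  have hNDE : D * E = N := EuclideanDomain.mul_div_cancel' hD0 hdvd4
  -- degrees
  have hdeg1 : ∀ x : K, x ≠ 0 → ((1 : K[X]) - Polynomial.C x * Polynomial.X).natDegree = 1 := by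
    intro x hx
    rw [show (1 : K[X]) - Polynomial.C x * Polynomial.X
        = Polynomial.C (-x) * Polynomial.X + Polynomial.C 1 by
      simp only [map_neg, map_one]; ring]
    exact natDegree_linear (neg_ne_zero.mpr hx)
  have hdegfa : fa.natDegree = 1 := by rw [hfa]; exact hdeg1 a ha
  have hdegfb : fb.natDegree = 1 := by rw [hfb]; exact hdeg1 b hb
  have hdegfc : fc.natDegree = 1 := by rw [hfc]; exact hdeg1 c hc
  have hdegfd : fd.natDegree = 1 := by rw [hfd]; exact hdeg1 d hd
  have hfa0 : fa ≠ 0 := fun h => by rw [h] at hdegfa; simp at hdegfa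
  have hfb0 : fb ≠ 0 := fun h => by rw [h] at hdegfb; simp at hdegfb
  have hfc0 : fc ≠ 0 := fun h => by rw [h] at hdegfc; simp at hdegfc
  have hfd0 : fd ≠ 0 := fun h => by rw [h] at hdegfd; simp at hdegfd
  have hdegD : D.natDegree = 4 := by
    rw [hD, natDegree_mul (mul_ne_zero (mul_ne_zero hfa0 hfb0) hfc0) hfd0,
      natDegree_mul (mul_ne_zero hfa0 hfb0) hfc0, natDegree_mul hfa0 hfb0,
      hdegfa, hdegfb, hdegfc, hdegfd]
  have hdeg1u : (1 + Polynomial.C u * Polynomial.X : K[X]).natDegree ≤ 1 := by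
    refine le_trans (natDegree_add_le _ _) ?_
    refine max_le (by simp) ?_
    exact le_trans (natDegree_C_mul_le u _) (by simp)
  have hdeg1v : (1 + Polynomial.C v * Polynomial.X : K[X]).natDegree ≤ 1 := by
    refine le_trans (natDegree_add_le _ _) ?_
    refine max_le (by simp) ?_
    exact le_trans (natDegree_C_mul_le v _) (by simp)
  have hdegP : P.natDegree ≤ 2 * g := by
    rw [hPdef]
    refine le_trans (natDegree_mul_le) ?_
    have h1 : ((1 + Polynomial.C u * Polynomial.X : K[X]) ^ g).natDegree ≤ g :=
      le_trans (natDegree_pow_le) (by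
        calc g * (1 + Polynomial.C u * Polynomial.X : K[X]).natDegree ≤ g * 1 :=
          Nat.mul_le_mul_left g hdeg1u
        _ = g := by omega)
    have h2 : ((1 + Polynomial.C v * Polynomial.X : K[X]) ^ g).natDegree ≤ g :=
      le_trans (natDegree_pow_le) (by
        calc g * (1 + Polynomial.C v * Polynomial.X : K[X]).natDegree ≤ g * 1 :=
          Nat.mul_le_mul_left g hdeg1v
        _ = g := by omega)
    omega
  have hcube : ∀ p q r : K[X], p.natDegree = 1 → q.natDegree = 1 → r.natDegree = 1 →
      (p * q * r).natDegree ≤ 3 := by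
    intro p q r hp hq hr
    refine le_trans natDegree_mul_le ?_
    have := natDegree_mul_le (p := p) (q := q)
    omega
  have hdegS : S.natDegree ≤ 2 * g := by
    have t1 : (Polynomial.C Ba * (fb * fc * fd)).natDegree ≤ 3 :=
      le_trans (natDegree_C_mul_le _ _) (hcube _ _ _ hdegfb hdegfc hdegfd)
    have t2 : (Polynomial.C Bb * (fa * fc * fd)).natDegree ≤ 3 :=
      le_trans (natDegree_C_mul_le _ _) (hcube _ _ _ hdegfa hdegfc hdegfd)
    have t3 : (Polynomial.C Bc * (fa * fb * fd)).natDegree ≤ 3 :=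
      le_trans (natDegree_C_mul_le _ _) (hcube _ _ _ hdegfa hdegfb hdegfd)
    have t4 : (Polynomial.C Bd * (fa * fb * fc)).natDegree ≤ 3 :=
      le_trans (natDegree_C_mul_le _ _) (hcube _ _ _ hdegfa hdegfb hdegfc)
    rw [hS]
    refine le_trans (natDegree_add_le _ _) ?_
    refine max_le (le_trans (natDegree_add_le _ _) ?_) (by omega)
    refine max_le (le_trans (natDegree_add_le _ _) ?_) (by omega)
    exact max_le (by omega) (by omega)
  have hdegN : N.natDegree ≤ 2 * g := by
    rw [hN]
    exact le_trans (natDegree_sub_le _ _) (max_le hdegP hdegS)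
  have hcoeffE : E.coeff (2 * g - 3) = 0 := by
    by_cases hE0 : E = 0
    · simp [hE0]
    · have hmul := natDegree_mul hD0 hE0
      rw [hNDE] at hmul
      apply Polynomial.coeff_eq_zero_of_natDegree_lt
      omega
  -- power series
  set Fa : PowerSeries K := 1 - PowerSeries.C a * PowerSeries.X with hFa
  set Fb : PowerSeries K := 1 - PowerSeries.C b * PowerSeries.X with hFb
  set Fc : PowerSeries K := 1 - PowerSeries.C c * PowerSeries.X with hFc
  set Fd : PowerSeries K := 1 - PowerSeries.C d * PowerSeries.X with hFd
  have coe_sub : ∀ p q : K[X], ((p - q : K[X]) : PowerSeries K) = (p : PowerSeries K) - q :=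
    fun p q => map_sub (Polynomial.coeToPowerSeries.ringHom (R := K)) p q
  have hcoefa : ((fa : K[X]) : PowerSeries K) = Fa := by
    rw [hfa, hFa, coe_sub]; push_cast; ring
  have hcoefb : ((fb : K[X]) : PowerSeries K) = Fb := by
    rw [hfb, hFb, coe_sub]; push_cast; ring
  have hcoefc : ((fc : K[X]) : PowerSeries K) = Fc := by
    rw [hfc, hFc, coe_sub]; push_cast; ring
  have hcoefd : ((fd : K[X]) : PowerSeries K) = Fd := by
    rw [hfd, hFd, coe_sub]; push_cast; ring
  have hcFa : PowerSeries.constantCoeff Fa ≠ 0 := by simp [hFa]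
  have hcFb : PowerSeries.constantCoeff Fb ≠ 0 := by simp [hFb]
  have hcFc : PowerSeries.constantCoeff Fc ≠ 0 := by simp [hFc]
  have hcFd : PowerSeries.constantCoeff Fd ≠ 0 := by simp [hFd]
  have cancA : (Fb * Fc * Fd) * (Fa⁻¹ * Fb⁻¹ * Fc⁻¹ * Fd⁻¹) = Fa⁻¹ := by
    have h := PowerSeries.mul_inv_cancel (Fb * Fc * Fd)
      (by rw [map_mul, map_mul]; exact mul_ne_zero (mul_ne_zero hcFb hcFc) hcFd)
    rw [PowerSeries.mul_inv_rev, PowerSeries.mul_inv_rev] at h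
    linear_combination Fa⁻¹ * h
  have cancB : (Fa * Fc * Fd) * (Fa⁻¹ * Fb⁻¹ * Fc⁻¹ * Fd⁻¹) = Fb⁻¹ := by
    have h := PowerSeries.mul_inv_cancel (Fa * Fc * Fd)
      (by rw [map_mul, map_mul]; exact mul_ne_zero (mul_ne_zero hcFa hcFc) hcFd)
    rw [PowerSeries.mul_inv_rev, PowerSeries.mul_inv_rev] at h
    linear_combination Fb⁻¹ * h
  have cancC : (Fa * Fb * Fd) * (Fa⁻¹ * Fb⁻¹ * Fc⁻¹ * Fd⁻¹) = Fc⁻¹ := by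
    have h := PowerSeries.mul_inv_cancel (Fa * Fb * Fd)
      (by rw [map_mul, map_mul]; exact mul_ne_zero (mul_ne_zero hcFa hcFb) hcFd)
    rw [PowerSeries.mul_inv_rev, PowerSeries.mul_inv_rev] at h
    linear_combination Fc⁻¹ * h
  have cancD : (Fa * Fb * Fc) * (Fa⁻¹ * Fb⁻¹ * Fc⁻¹ * Fd⁻¹) = Fd⁻¹ := by
    have h := PowerSeries.mul_inv_cancel (Fa * Fb * Fc)
      (by rw [map_mul, map_mul]; exact mul_ne_zero (mul_ne_zero hcFa hcFb) hcFc)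
    rw [PowerSeries.mul_inv_rev, PowerSeries.mul_inv_rev] at h
    linear_combination Fd⁻¹ * h
  have cancAll : (Fa * Fb * Fc * Fd) * (Fa⁻¹ * Fb⁻¹ * Fc⁻¹ * Fd⁻¹) = 1 := by
    have h := PowerSeries.mul_inv_cancel (Fa * Fb * Fc * Fd)
      (by rw [map_mul, map_mul, map_mul]
          exact mul_ne_zero (mul_ne_zero (mul_ne_zero hcFa hcFb) hcFc) hcFd)
    rw [PowerSeries.mul_inv_rev, PowerSeries.mul_inv_rev, PowerSeries.mul_inv_rev] at h
    linear_combination h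
  -- main identity in power series
  have hPid : P = S + D * E := by
    rw [hN] at hNDE
    linear_combination -hNDE
  have hPid2 : ((P : K[X]) : PowerSeries K)
      = ((S : K[X]) : PowerSeries K)
        + ((D : K[X]) : PowerSeries K) * ((E : K[X]) : PowerSeries K) := by
    rw [hPid]; push_cast; ring
  have hPcoe : ((P : K[X]) : PowerSeries K)
      = (1 + PowerSeries.C u * PowerSeries.X) ^ g *
        (1 + PowerSeries.C v * PowerSeries.X) ^ g := by
    rw [hPdef]; push_cast; ring
  have hScoe : ((S : K[X]) : PowerSeries K)
      = PowerSeries.C Ba * (Fb * Fc * Fd) + PowerSeries.C Bb * (Fa * Fc * Fd)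
        + PowerSeries.C Bc * (Fa * Fb * Fd) + PowerSeries.C Bd * (Fa * Fb * Fc) := by
    rw [hS]; push_cast [hcoefa, hcoefb, hcoefc, hcoefd]; ring
  have hDcoe : ((D : K[X]) : PowerSeries K) = Fa * Fb * Fc * Fd := by
    rw [hD]; push_cast [hcoefa, hcoefb, hcoefc, hcoefd]; ring
  have hP2 : (1 + PowerSeries.C u * PowerSeries.X) ^ g *
      (1 + PowerSeries.C v * PowerSeries.X) ^ g
      = (PowerSeries.C Ba * (Fb * Fc * Fd) + PowerSeries.C Bb * (Fa * Fc * Fd)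
        + PowerSeries.C Bc * (Fa * Fb * Fd) + PowerSeries.C Bd * (Fa * Fb * Fc))
        + (Fa * Fb * Fc * Fd) * ((E : K[X]) : PowerSeries K) := by
    rw [← hPcoe, hPid2, hScoe, hDcoe]
  have final : (1 + PowerSeries.C u * PowerSeries.X) ^ g *
      (1 + PowerSeries.C v * PowerSeries.X) ^ g * Fa⁻¹ * Fb⁻¹ * Fc⁻¹ * Fd⁻¹
      = PowerSeries.C Ba * Fa⁻¹ + PowerSeries.C Bb * Fb⁻¹
        + PowerSeries.C Bc * Fc⁻¹ + PowerSeries.C Bd * Fd⁻¹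
        + ((E : K[X]) : PowerSeries K) := by
    linear_combination (Fa⁻¹ * Fb⁻¹ * Fc⁻¹ * Fd⁻¹) * hP2
      + PowerSeries.C Ba * cancA + PowerSeries.C Bb * cancB
      + PowerSeries.C Bc * cancC + PowerSeries.C Bd * cancD
      + ((E : K[X]) : PowerSeries K) * cancAll
  have ga : PowerSeries.coeff (2 * g - 3) Fa⁻¹ = a ^ (2 * g - 3) := by
    rw [hFa]; exact geom_series_coeff a _
  have gb : PowerSeries.coeff (2 * g - 3) Fb⁻¹ = b ^ (2 * g - 3) := by
    rw [hFb]; exact geom_series_coeff b _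
  have gc : PowerSeries.coeff (2 * g - 3) Fc⁻¹ = c ^ (2 * g - 3) := by
    rw [hFc]; exact geom_series_coeff c _
  have gd : PowerSeries.coeff (2 * g - 3) Fd⁻¹ = d ^ (2 * g - 3) := by
    rw [hFd]; exact geom_series_coeff d _
  have gE : PowerSeries.coeff (2 * g - 3) ((E : K[X]) : PowerSeries K) = 0 := by
    rw [Polynomial.coeff_coe]; exact hcoeffE
  -- closed forms for the residues
  have h3a : a ^ 3 * a ^ (2 * g - 3) = a ^ (2 * g) := by rw [← pow_add]; congr 1; omega
  have h3b : b ^ 3 * b ^ (2 * g - 3) = b ^ (2 * g) := by rw [← pow_add]; congr 1; omega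
  have h3c : c ^ 3 * c ^ (2 * g - 3) = c ^ (2 * g) := by rw [← pow_add]; congr 1; omega
  have h3d : d ^ 3 * d ^ (2 * g - 3) = d ^ (2 * g) := by rw [← pow_add]; congr 1; omega
  have hWa : pa * a ^ (2 * g) = (a + u) ^ g * (a + v) ^ g := by
    rw [hpa, hPdef]
    simp only [eval_mul, eval_pow, eval_add, eval_one, eval_C, eval_X]
    have hbase : ((1 : K) + u * a⁻¹) * ((1 : K) + v * a⁻¹) * a ^ 2 = (a + u) * (a + v) := by
      linear_combination ((u + v) * a + u * v * (a * a⁻¹ + 1)) * mul_inv_cancel₀ ha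
    rw [pow_mul, ← mul_pow, ← mul_pow, hbase, mul_pow]
  have hWb : pb * b ^ (2 * g) = (b + u) ^ g * (b + v) ^ g := by
    rw [hpb, hPdef]
    simp only [eval_mul, eval_pow, eval_add, eval_one, eval_C, eval_X]
    have hbase : ((1 : K) + u * b⁻¹) * ((1 : K) + v * b⁻¹) * b ^ 2 = (b + u) * (b + v) := by
      linear_combination ((u + v) * b + u * v * (b * b⁻¹ + 1)) * mul_inv_cancel₀ hb
    rw [pow_mul, ← mul_pow, ← mul_pow, hbase, mul_pow]
  have hWc : pc * c ^ (2 * g) = (c + u) ^ g * (c + v) ^ g := by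
    rw [hpc, hPdef]
    simp only [eval_mul, eval_pow, eval_add, eval_one, eval_C, eval_X]
    have hbase : ((1 : K) + u * c⁻¹) * ((1 : K) + v * c⁻¹) * c ^ 2 = (c + u) * (c + v) := by
      linear_combination ((u + v) * c + u * v * (c * c⁻¹ + 1)) * mul_inv_cancel₀ hc
    rw [pow_mul, ← mul_pow, ← mul_pow, hbase, mul_pow]
  have hWd : pd * d ^ (2 * g) = (d + u) ^ g * (d + v) ^ g := by
    rw [hpd, hPdef]
    simp only [eval_mul, eval_pow, eval_add, eval_one, eval_C, eval_X]
    have hbase : ((1 : K) + u * d⁻¹) * ((1 : K) + v * d⁻¹) * d ^ 2 = (d + u) * (d + v) := by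
      linear_combination ((u + v) * d + u * v * (d * d⁻¹ + 1)) * mul_inv_cancel₀ hd
    rw [pow_mul, ← mul_pow, ← mul_pow, hbase, mul_pow]
  have key_a : Ba * a ^ (2 * g - 3)
      = (a + u) ^ g * (a + v) ^ g / ((a - b) * (a - c) * (a - d)) := by
    rw [hBa, div_mul_eq_mul_div, mul_assoc, h3a, hWa]
  have key_b : Bb * b ^ (2 * g - 3)
      = (b + u) ^ g * (b + v) ^ g / ((b - a) * (b - c) * (b - d)) := by
    rw [hBb, div_mul_eq_mul_div, mul_assoc, h3b, hWb]
  have key_c : Bc * c ^ (2 * g - 3)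
      = (c + u) ^ g * (c + v) ^ g / ((c - a) * (c - b) * (c - d)) := by
    rw [hBc, div_mul_eq_mul_div, mul_assoc, h3c, hWc]
  have key_d : Bd * d ^ (2 * g - 3)
      = (d + u) ^ g * (d + v) ^ g / ((d - a) * (d - b) * (d - c)) := by
    rw [hBd, div_mul_eq_mul_div, mul_assoc, h3d, hWd]
  rw [final, map_add, map_add, map_add, map_add, PowerSeries.coeff_C_mul,
    PowerSeries.coeff_C_mul, PowerSeries.coeff_C_mul, PowerSeries.coeff_C_mul,
    ga, gb, gc, gd, gE, add_zero, key_a, key_b, key_c, key_d]
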